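/- Let H and K be finite connected graphs whose vertex sets intersect in exactly one vertex k and whose edge sets are disjoint, and let G = H ∪ K. Let f : ℝ → ℝ be an odd continuous function with primitive g, and let E_G, E_H, E_K denote the corresponding energy functions, so that E_G(x) = E_H(x|_{V(H)}) + E_K(x|_{V(K)}). Then an equilibrium x ∈ ℝ^{V(G)} is a local minimizer of E_G if and only if x|_{V(H)} is a local minimizer of E_H and x|_{V(K)} is a local minimizer of E_K. -/

import Mathlib

/-- `Eo` is a fixed orientation of the edges of `G`. -/
def IsOrientation {α : Type} (G : SimpleGraph α) (Eo : Finset (α × α)) : Prop :=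
  (∀ e ∈ Eo, G.Adj e.1 e.2) ∧
  (∀ i j : α, G.Adj i j → ((i, j) ∈ Eo ∨ (j, i) ∈ Eo)) ∧
  (∀ i j : α, (i, j) ∈ Eo → (j, i) ∉ Eo)

private lemma g_even_aux (f g : ℝ → ℝ) (hodd : ∀ t, f (-t) = -f t)
    (hg : ∀ t, HasDerivAt g (f t) t) : ∀ t, g (-t) = g t := by
  have key : ∀ t : ℝ, HasDerivAt (fun t => g (-t) - g t) 0 t := by
    intro t
    have h1 : HasDerivAt (fun t : ℝ => g (-t)) (f (-t) * (-1)) t :=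
      (hg (-t)).comp t (hasDerivAt_neg t)
    have h2 := h1.sub (hg t)
    have : f (-t) * (-1) - f t = 0 := by rw [hodd t]; ring
    rwa [this] at h2
  have hdiff : Differentiable ℝ (fun t => g (-t) - g t) :=
    fun t => (key t).differentiableAt
  have hderiv : ∀ t, deriv (fun t => g (-t) - g t) t = 0 := fun t => (key t).deriv
  intro t
  have h := is_const_of_deriv_eq_zero hdiff hderiv t 0
  simp only [neg_zero, sub_self] at h
  linarith

private lemma sum_orient {α : Type} [Fintype α] [DecidableEq α]
    (G : SimpleGraph α) [DecidableRel G.Adj]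
    (Eo : Finset (α × α)) (hor : IsOrientation G Eo)
    (F : α → α → ℝ) (hF : ∀ a b, F a b = F b a) :
    ∑ e ∈ Eo, F e.1 e.2 = ∑ s ∈ G.edgeFinset, Sym2.lift ⟨F, hF⟩ s := by
  refine Finset.sum_bij (fun e _ => Sym2.mk e.1 e.2) ?_ ?_ ?_ ?_
  · intro e he
    rw [SimpleGraph.mem_edgeFinset]
    exact (G.mem_edgeSet).2 (hor.1 e he)
  · intro e1 h1 e2 h2 heq
    rcases Sym2.mk_eq_mk_iff.mp heq with h | h
    · exact h
    · exfalso
      rw [h] at h1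
      exact hor.2.2 e2.1 e2.2 h2 h1
  · intro s hs
    rw [SimpleGraph.mem_edgeFinset] at hs
    induction s with
    | _ a b =>
      rcases hor.2.1 a b ((G.mem_edgeSet).1 hs) with h | h
      · exact ⟨(a, b), h, rfl⟩
      · exact ⟨(b, a), h, Sym2.eq_swap⟩
  · intro e he
    exact (Sym2.lift_mk ⟨F, hF⟩ e.1 e.2).symm

private lemma energy_split {V : Type} [Fintype V] [DecidableEq V]
    (VH VK : Finset V)
    (H : SimpleGraph {v // v ∈ VH}) [DecidableRel H.Adj]
    (K : SimpleGraph {v // v ∈ VK}) [DecidableRel K.Adj]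
    (G : SimpleGraph V) [DecidableRel G.Adj]
    (hG : ∀ i j : V, G.Adj i j ↔
      ((∃ (hi : i ∈ VH) (hj : j ∈ VH), H.Adj ⟨i, hi⟩ ⟨j, hj⟩) ∨
       (∃ (hi : i ∈ VK) (hj : j ∈ VK), K.Adj ⟨i, hi⟩ ⟨j, hj⟩)))
    (hdisj : ∀ (i j : V) (hiH : i ∈ VH) (hjH : j ∈ VH) (hiK : i ∈ VK) (hjK : j ∈ VK),
      ¬(H.Adj ⟨i, hiH⟩ ⟨j, hjH⟩ ∧ K.Adj ⟨i, hiK⟩ ⟨j, hjK⟩))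
    (g : ℝ → ℝ) (hge : ∀ t, g (-t) = g t)
    (EG : Finset (V × V)) (horG : IsOrientation G EG)
    (EH : Finset ({v // v ∈ VH} × {v // v ∈ VH})) (horH : IsOrientation H EH)
    (EK : Finset ({v // v ∈ VK} × {v // v ∈ VK})) (horK : IsOrientation K EK)
    (y : V → ℝ) :
    ∑ e ∈ EG, g (y e.2 - y e.1) =
      (∑ e ∈ EH, g (y e.2.1 - y e.1.1)) + ∑ e ∈ EK, g (y e.2.1 - y e.1.1) := by
  have symG : ∀ a b : V, g (y b - y a) = g (y a - y b) := by
    intro a b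
    have := hge (y a - y b); rw [neg_sub] at this; exact this
  have symH : ∀ a b : {v // v ∈ VH}, g (y b.1 - y a.1) = g (y a.1 - y b.1) :=
    fun a b => symG a.1 b.1
  have symK : ∀ a b : {v // v ∈ VK}, g (y b.1 - y a.1) = g (y a.1 - y b.1) :=
    fun a b => symG a.1 b.1
  rw [sum_orient G EG horG _ symG, sum_orient H EH horH _ symH,
    sum_orient K EK horK _ symK]
  have hinjH : Function.Injective (Sym2.map (Subtype.val : {v // v ∈ VH} → V)) :=
    Sym2.map.injective Subtype.val_injective
  have hinjK : Function.Injective (Sym2.map (Subtype.val : {v // v ∈ VK} → V)) :=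
    Sym2.map.injective Subtype.val_injective
  have hAB : G.edgeFinset =
      (H.edgeFinset.image (Sym2.map Subtype.val)) ∪
      (K.edgeFinset.image (Sym2.map Subtype.val)) := by
    ext s
    simp only [Finset.mem_union, Finset.mem_image, SimpleGraph.mem_edgeFinset]
    constructor
    · intro hs
      induction s with
      | _ i j =>
        rcases (hG i j).1 ((G.mem_edgeSet).1 hs) with ⟨hi, hj, hadj⟩ | ⟨hi, hj, hadj⟩
        · exact Or.inl ⟨s(⟨i, hi⟩, ⟨j, hj⟩), (H.mem_edgeSet).2 hadj,
            by rw [Sym2.map_pair_eq]⟩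
        · exact Or.inr ⟨s(⟨i, hi⟩, ⟨j, hj⟩), (K.mem_edgeSet).2 hadj,
            by rw [Sym2.map_pair_eq]⟩
    · rintro (⟨t, ht, rfl⟩ | ⟨t, ht, rfl⟩)
      · induction t with
        | _ a b =>
          rw [Sym2.map_pair_eq]
          exact (G.mem_edgeSet).2 ((hG a.1 b.1).2 (Or.inl ⟨a.2, b.2, (H.mem_edgeSet).1 ht⟩))
      · induction t with
        | _ a b =>
          rw [Sym2.map_pair_eq]
          exact (G.mem_edgeSet).2 ((hG a.1 b.1).2 (Or.inr ⟨a.2, b.2, (K.mem_edgeSet).1 ht⟩))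
  have hdisjAB : Disjoint (H.edgeFinset.image (Sym2.map Subtype.val))
      (K.edgeFinset.image (Sym2.map Subtype.val)) := by
    rw [Finset.disjoint_left]
    rintro s hsA hsB
    rcases Finset.mem_image.1 hsA with ⟨sH, hsH, rfl⟩
    rcases Finset.mem_image.1 hsB with ⟨sK, hsK, heq⟩
    induction sH with
    | _ a b =>
      induction sK with
      | _ c d =>
        rw [Sym2.map_pair_eq, Sym2.map_pair_eq] at heq
        have hH' : H.Adj a b := (H.mem_edgeSet).1 (SimpleGraph.mem_edgeFinset.1 hsH)
        have hK' : K.Adj c d := (K.mem_edgeSet).1 (SimpleGraph.mem_edgeFinset.1 hsK)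
        rcases Sym2.eq_iff.1 heq with ⟨h1, h2⟩ | ⟨h1, h2⟩
        · refine hdisj a.1 b.1 a.2 b.2 (h1 ▸ c.2) (h2 ▸ d.2) ⟨hH', ?_⟩
          have e1 : (⟨(a : V), h1 ▸ c.2⟩ : {v // v ∈ VK}) = c := Subtype.ext h1.symm
          have e2 : (⟨(b : V), h2 ▸ d.2⟩ : {v // v ∈ VK}) = d := Subtype.ext h2.symm
          rw [e1, e2]; exact hK'
        · refine hdisj a.1 b.1 a.2 b.2 (h2 ▸ d.2) (h1 ▸ c.2) ⟨hH', ?_⟩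
          have e1 : (⟨(a : V), h2 ▸ d.2⟩ : {v // v ∈ VK}) = d := Subtype.ext h2.symm
          have e2 : (⟨(b : V), h1 ▸ c.2⟩ : {v // v ∈ VK}) = c := Subtype.ext h1.symm
          rw [e1, e2]; exact hK'.symm
  rw [hAB, Finset.sum_union hdisjAB,
    Finset.sum_image (fun a _ b _ h => hinjH h),
    Finset.sum_image (fun a _ b _ h => hinjK h)]
  congr 1
  · refine Finset.sum_congr rfl fun s _ => ?_
    induction s with
    | _ a b => rw [Sym2.map_pair_eq, Sym2.lift_mk, Sym2.lift_mk]
  · refine Finset.sum_congr rfl fun s _ => ?_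
    induction s with
    | _ a b => rw [Sym2.map_pair_eq, Sym2.lift_mk, Sym2.lift_mk]

/-- Let `G = H ∪ K` where the finite connected graphs `H` and `K` meet
in exactly one vertex `kv` and have disjoint edge sets, let `f` be odd continuous
with primitive `g`, and let `E_G, E_H, E_K` be the corresponding energies.  Then an
equilibrium `x` of `G` is a local minimizer of `E_G` iff `x|_{V(H)}` is a local
minimizer of `E_H` and `x|_{V(K)}` is a local minimizer of `E_K`. -/
theorem stmt_18 {V : Type} [Fintype V] [DecidableEq V]
    (VH VK : Finset V) (kv : V) (hk : VH ∩ VK = {kv}) (hU : VH ∪ VK = Finset.univ)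
    (H : SimpleGraph {v // v ∈ VH}) [DecidableRel H.Adj] (hH : H.Connected)
    (K : SimpleGraph {v // v ∈ VK}) [DecidableRel K.Adj] (hK : K.Connected)
    (G : SimpleGraph V) [DecidableRel G.Adj]
    (hG : ∀ i j : V, G.Adj i j ↔
      ((∃ (hi : i ∈ VH) (hj : j ∈ VH), H.Adj ⟨i, hi⟩ ⟨j, hj⟩) ∨
       (∃ (hi : i ∈ VK) (hj : j ∈ VK), K.Adj ⟨i, hi⟩ ⟨j, hj⟩)))
    (hdisj : ∀ (i j : V) (hiH : i ∈ VH) (hjH : j ∈ VH) (hiK : i ∈ VK) (hjK : j ∈ VK),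
      ¬(H.Adj ⟨i, hiH⟩ ⟨j, hjH⟩ ∧ K.Adj ⟨i, hiK⟩ ⟨j, hjK⟩))
    (f : ℝ → ℝ) (hodd : ∀ t : ℝ, f (-t) = -f t) (hcont : Continuous f)
    (g : ℝ → ℝ) (hg : ∀ t : ℝ, HasDerivAt g (f t) t)
    (EG : Finset (V × V)) (horG : IsOrientation G EG)
    (EH : Finset ({v // v ∈ VH} × {v // v ∈ VH})) (horH : IsOrientation H EH)
    (EK : Finset ({v // v ∈ VK} × {v // v ∈ VK})) (horK : IsOrientation K EK)
    (x : V → ℝ) (hx : ∀ i : V, ∑ j ∈ G.neighborFinset i, f (x j - x i) = 0) :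
    IsLocalMin (fun y : V → ℝ => ∑ e ∈ EG, g (y e.2 - y e.1)) x ↔
      (IsLocalMin (fun y : {v // v ∈ VH} → ℝ => ∑ e ∈ EH, g (y e.2 - y e.1))
          (fun i : {v // v ∈ VH} => x i) ∧
       IsLocalMin (fun y : {v // v ∈ VK} → ℝ => ∑ e ∈ EK, g (y e.2 - y e.1))
          (fun i : {v // v ∈ VK} => x i)) := by
  have hge := g_even_aux f g hodd hg
  have hsplit : ∀ y : V → ℝ, ∑ e ∈ EG, g (y e.2 - y e.1) =
      (∑ e ∈ EH, g (y e.2.1 - y e.1.1)) + ∑ e ∈ EK, g (y e.2.1 - y e.1.1) :=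
    energy_split VH VK H K G hG hdisj g hge EG horG EH horH EK horK
  have hkHK : kv ∈ VH ∩ VK := by rw [hk]; exact Finset.mem_singleton_self kv
  have hkH : kv ∈ VH := (Finset.mem_inter.1 hkHK).1
  have hkK : kv ∈ VK := (Finset.mem_inter.1 hkHK).2
  constructor
  · intro hmin
    constructor
    · -- H part
      set T : ({v // v ∈ VH} → ℝ) → (V → ℝ) :=
        fun yH i => if h : i ∈ VH then yH ⟨i, h⟩ else x i + (yH ⟨kv, hkH⟩ - x kv)
        with hT
      have hTcont : Continuous T := by
        apply continuous_pi
        intro i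
        by_cases h : i ∈ VH
        · simp only [hT, dif_pos h]
          exact continuous_apply _
        · simp only [hT, dif_neg h]
          exact continuous_const.add ((continuous_apply _).sub continuous_const)
      have hTx : T (fun i => x i.1) = x := by
        funext i
        by_cases h : i ∈ VH <;> simp [hT, h]
      have hTH : ∀ yH (i : {v // v ∈ VH}), T yH i.1 = yH i := by
        intro yH i
        simp only [hT]
        rw [dif_pos i.2]
      have hTK : ∀ yH (i : {v // v ∈ VK}), T yH i.1 = x i.1 + (yH ⟨kv, hkH⟩ - x kv) := by
        intro yH i
        by_cases h : (i : V) ∈ VH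
        · have hik : (i : V) = kv := by
            have : (i : V) ∈ VH ∩ VK := Finset.mem_inter.2 ⟨h, i.2⟩
            rw [hk] at this; exact Finset.mem_singleton.1 this
          simp only [hT, dif_pos h]
          rw [show (⟨(i : V), h⟩ : {v // v ∈ VH}) = ⟨kv, hkH⟩ from Subtype.ext hik, hik]
          ring
        · simp only [hT, dif_neg h]
      have hFT : ∀ yH, ∑ e ∈ EG, g (T yH e.2 - T yH e.1) =
          (∑ e ∈ EH, g (yH e.2 - yH e.1)) + ∑ e ∈ EK, g (x e.2.1 - x e.1.1) := by
        intro yH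
        rw [hsplit (T yH)]
        congr 1
        · exact Finset.sum_congr rfl fun e _ => by rw [hTH yH e.1, hTH yH e.2]
        · refine Finset.sum_congr rfl fun e _ => ?_
          rw [hTK yH e.1, hTK yH e.2]
          congr 1; ring
      have ht : Filter.Tendsto T (nhds (fun i : {v // v ∈ VH} => x i.1)) (nhds x) := by
        have := hTcont.continuousAt (x := fun i : {v // v ∈ VH} => x i.1)
        rwa [ContinuousAt, hTx] at this
      have key := ht.eventually hmin
      refine key.mono fun yH hy => ?_
      simp only at hy ⊢
      rw [hFT yH, hsplit x] at hy
      linarith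
    · -- K part
      set T : ({v // v ∈ VK} → ℝ) → (V → ℝ) :=
        fun yK i => if h : i ∈ VK then yK ⟨i, h⟩ else x i + (yK ⟨kv, hkK⟩ - x kv)
        with hT
      have hTcont : Continuous T := by
        apply continuous_pi
        intro i
        by_cases h : i ∈ VK
        · simp only [hT, dif_pos h]
          exact continuous_apply _
        · simp only [hT, dif_neg h]
          exact continuous_const.add ((continuous_apply _).sub continuous_const)
      have hTx : T (fun i => x i.1) = x := by
        funext i
        by_cases h : i ∈ VK <;> simp [hT, h]
      have hTH : ∀ yK (i : {v // v ∈ VK}), T yK i.1 = yK i := by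
        intro yK i
        simp only [hT]
        rw [dif_pos i.2]
      have hTK : ∀ yK (i : {v // v ∈ VH}), T yK i.1 = x i.1 + (yK ⟨kv, hkK⟩ - x kv) := by
        intro yK i
        by_cases h : (i : V) ∈ VK
        · have hik : (i : V) = kv := by
            have : (i : V) ∈ VH ∩ VK := Finset.mem_inter.2 ⟨i.2, h⟩
            rw [hk] at this; exact Finset.mem_singleton.1 this
          simp only [hT, dif_pos h]
          rw [show (⟨(i : V), h⟩ : {v // v ∈ VK}) = ⟨kv, hkK⟩ from Subtype.ext hik, hik]
          ring
        · simp only [hT, dif_neg h]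
      have hFT : ∀ yK, ∑ e ∈ EG, g (T yK e.2 - T yK e.1) =
          (∑ e ∈ EH, g (x e.2.1 - x e.1.1)) + ∑ e ∈ EK, g (yK e.2 - yK e.1) := by
        intro yK
        rw [hsplit (T yK)]
        congr 1
        · refine Finset.sum_congr rfl fun e _ => ?_
          rw [hTK yK e.1, hTK yK e.2]
          congr 1; ring
        · exact Finset.sum_congr rfl fun e _ => by rw [hTH yK e.1, hTH yK e.2]
      have ht : Filter.Tendsto T (nhds (fun i : {v // v ∈ VK} => x i.1)) (nhds x) := by
        have := hTcont.continuousAt (x := fun i : {v // v ∈ VK} => x i.1)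
        rwa [ContinuousAt, hTx] at this
      have key := ht.eventually hmin
      refine key.mono fun yK hy => ?_
      simp only at hy ⊢
      rw [hFT yK, hsplit x] at hy
      linarith
  · rintro ⟨h1, h2⟩
    have rH : Continuous (fun y : V → ℝ => fun i : {v // v ∈ VH} => y i.1) :=
      continuous_pi fun i => continuous_apply _
    have rK : Continuous (fun y : V → ℝ => fun i : {v // v ∈ VK} => y i.1) :=
      continuous_pi fun i => continuous_apply _
    have e1 := (rH.continuousAt (x := x)).eventually h1
    have e2 := (rK.continuousAt (x := x)).eventually h2
    refine (e1.and e2).mono fun y hy => ?_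
    obtain ⟨hy1, hy2⟩ := hy
    simp only at hy1 hy2 ⊢
    rw [hsplit x, hsplit y]
    exact add_le_add hy1 hy2
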